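/- Let P be a projection algebra and let T be the quotient of the free semigroup on X_P = {x_p : p ∈ P} by the congruence ∼ generated by the relations x_p² = x_p, (x_p x_q)² = x_p x_q, x_p x_q x_p = x_{qθ_p} (p, q ∈ P). Let S be any regular *-semigroup with projection set P(S), and let φ : P → P(S) be a map satisfying φ(qθ_p) = φ(p)φ(q)φ(p) for all p, q ∈ P (a projection algebra morphism). Then there exists a unique semigroup homomorphism Φ : T → S with Φ([x_p]) = φ(p) for all p ∈ P; moreover Φ respects the involutions, in the sense that Φ([x_{p_k}⋯x_{p₁}]) = (Φ([x_{p₁}⋯x_{p_k}]))* for every word x_{p₁}⋯x_{p_k}. -/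

import Mathlib

structure ProjectionAlgebra (P : Type*) where
  th : P → P → P
  P1 : ∀ p, th p p = p
  P2 : ∀ p q, th p (th p q) = th p q
  P3 : ∀ p q, th p (th q p) = th p q
  P4 : ∀ p q r, th p (th q (th p r)) = th (th p q) r
  P5 : ∀ p q r, th q (th p (th q (th p r))) = th q (th p r)

namespace ProjectionAlgebra

variable {P : Type*} (A : ProjectionAlgebra P)

/-- `p ≤ q` iff `p = pθ_q`. -/
def le (p q : P) : Prop := p = A.th q p

/-- `p ≤F q` iff `p = qθ_p`. -/
def leF (p q : P) : Prop := p = A.th p q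

/-- `p F q` iff `p ≤F q` and `q ≤F p`. -/
def Frel (p q : P) : Prop := A.leF p q ∧ A.leF q p

/-- `(e, f)` is a `p`-linked pair: `f = eθ_pθ_f` and `e = fθ_pθ_e`. -/
def Linked (p e f : P) : Prop :=
  f = A.th f (A.th p e) ∧ e = A.th e (A.th p f)

/-- `q θ_{p₁} ⋯ θ_{p_k}` for the list `ps = [p₁, …, p_k]`. -/
def applyList (q : P) (ps : List P) : P := ps.foldl (fun x p => A.th p x) q

end ProjectionAlgebra

/-- The defining relations of the free projection-generated regular *-semigroup
`PG(P)`: `x_p² = x_p`, `(x_p x_q)² = x_p x_q`, and `x_p x_q x_p = x_{qθ_p}`,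
for `p, q ∈ P`, as a binary relation on the free semigroup over `P`. -/
def PGrel {P : Type*} (A : ProjectionAlgebra P) :
    FreeSemigroup P → FreeSemigroup P → Prop := fun u v =>
  (∃ p : P, u = FreeSemigroup.of p * FreeSemigroup.of p ∧ v = FreeSemigroup.of p) ∨
  (∃ p q : P, u = (FreeSemigroup.of p * FreeSemigroup.of q) *
      (FreeSemigroup.of p * FreeSemigroup.of q) ∧
    v = FreeSemigroup.of p * FreeSemigroup.of q) ∨
  (∃ p q : P, u = FreeSemigroup.of p * FreeSemigroup.of q * FreeSemigroup.of p ∧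
    v = FreeSemigroup.of (A.th p q))

/-- The word `x_h x_{t₁} ⋯ x_{t_m}` in the free semigroup. -/
def word1 {P : Type*} (h : P) (t : List P) : FreeSemigroup P :=
  t.foldl (fun w p => w * FreeSemigroup.of p) (FreeSemigroup.of h)

/-- The reversed word `x_{t_m} ⋯ x_{t₁} x_h` in the free semigroup. -/
def word1r {P : Type*} (h : P) (t : List P) : FreeSemigroup P :=
  t.foldl (fun w p => FreeSemigroup.of p * w) (FreeSemigroup.of h)

/-- Let `T = X_P⁺/∼` be the quotient of the free semigroup on `X_P` by
the congruence generated by `x_p² = x_p`, `(x_p x_q)² = x_p x_q`,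
`x_p x_q x_p = x_{qθ_p}`.  Let `S` be a regular *-semigroup, and `φ : P → P(S)` a
projection algebra morphism (so each `φ p` is a projection of `S`, and
`φ(qθ_p) = φ(p) φ(q) φ(p)`).  Then there is a unique semigroup homomorphism
`Φ : T → S` with `Φ([x_p]) = φ(p)` for all `p`; moreover `Φ` respects the involutions:
`Φ([x_{p_k}⋯x_{p₁}]) = (Φ([x_{p₁}⋯x_{p_k}]))*` for every word. -/
theorem stmt15 {P : Type*} (A : ProjectionAlgebra P)
    {S : Type*} [Semigroup S] [StarMul S]
    (hreg : ∀ a : S, a * star a * a = a)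
    (φ : P → S)
    (hproj : ∀ p : P, φ p * φ p = φ p ∧ star (φ p) = φ p)
    (hmor : ∀ p q : P, φ (A.th p q) = φ p * φ q * φ p) :
    (∃! Φ : (conGen (PGrel A)).Quotient →ₙ* S,
      ∀ p : P, Φ ↑(FreeSemigroup.of p) = φ p) ∧
    (∀ Φ : (conGen (PGrel A)).Quotient →ₙ* S,
      (∀ p : P, Φ ↑(FreeSemigroup.of p) = φ p) →
      ∀ (h : P) (t : List P), Φ ↑(word1r h t) = star (Φ ↑(word1 h t))) := by
  classical
  set ψ : FreeSemigroup P →ₙ* S := FreeSemigroup.lift φ with hψ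
  have hψof : ∀ p, ψ (FreeSemigroup.of p) = φ p := fun p => FreeSemigroup.lift_of φ p
  have hker : conGen (PGrel A) ≤ Con.ker ψ := by
    apply Con.conGen_le.mpr
    rintro u v (⟨p, rfl, rfl⟩ | ⟨p, q, rfl, rfl⟩ | ⟨p, q, rfl, rfl⟩)
    · show ψ _ = ψ _
      simp only [map_mul, hψof, (hproj p).1]
    · show ψ _ = ψ _
      have hp2 : ∀ x : S, φ p * (φ p * x) = φ p * x := fun x => by
        rw [← mul_assoc, (hproj p).1]
      have hq2 : ∀ x : S, φ q * (φ q * x) = φ q * x := fun x => by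
        rw [← mul_assoc, (hproj q).1]
      have h := hreg (φ p * φ q)
      rw [star_mul, (hproj p).2, (hproj q).2] at h
      simp only [map_mul, hψof, mul_assoc]
      simp only [mul_assoc, hp2, hq2] at h
      exact h
    · show ψ _ = ψ _
      simp only [map_mul, hψof, hmor]
  set Φ₀ : (conGen (PGrel A)).Quotient →ₙ* S :=
    { toFun := fun x => Con.liftOn x ψ (fun a b h => hker h),
      map_mul' := by
        rintro ⟨a⟩ ⟨b⟩
        exact ψ.map_mul a b } with hΦ₀
  have hΦ₀coe : ∀ w : FreeSemigroup P, Φ₀ ↑w = ψ w := fun w => rfl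
  have hΦ₀of : ∀ p : P, Φ₀ ↑(FreeSemigroup.of p) = φ p := fun p => hψof p
  have huniq : ∀ Φ : (conGen (PGrel A)).Quotient →ₙ* S,
      (∀ p : P, Φ ↑(FreeSemigroup.of p) = φ p) → Φ = Φ₀ := by
    intro Φ hΦ
    ext x
    induction x using Con.induction_on with
    | H w =>
      induction w using FreeSemigroup.recOnMul with
      | ih1 p => rw [hΦ p, hΦ₀of p]
      | ih2 x y ihx ihy =>
        rw [Con.coe_mul, map_mul, map_mul, ihx, ihy]
  refine ⟨⟨Φ₀, hΦ₀of, huniq⟩, ?_⟩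
  intro Φ hΦ h t
  induction t using List.reverseRecOn with
  | nil =>
    show Φ ↑(FreeSemigroup.of h) = star (Φ ↑(FreeSemigroup.of h))
    rw [hΦ h, (hproj h).2]
  | append_singleton t p ih =>
    have e1 : word1 h (t ++ [p]) = word1 h t * FreeSemigroup.of p := by
      simp [word1, List.foldl_append]
    have e2 : word1r h (t ++ [p]) = FreeSemigroup.of p * word1r h t := by
      simp [word1r, List.foldl_append]
    rw [e1, e2, Con.coe_mul, Con.coe_mul, map_mul, map_mul, star_mul, ih, hΦ p,
      (hproj p).2]
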